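/- Let (W_α(u))_{u≥0} be an inverse α-stable subordinator with 0 < α < 1, normalized so that E W_α(u) = u^α / (Γ(1−α)Γ(1+α)). For 0 < β ≤ α < 1 and u > 0, the fractionally integrated inverse stable subordinator Y_{α,β}(u) = ∫_{[0,u]} (u−y)^{−β} dW_α(y) (pathwise Lebesgue–Stieltjes integral) has finite expectation: E Y_{α,β}(u) = c_α u^{α−β} (1 + β ∫₀¹ (1 − x^α)(1−x)^{−β−1} dx) < ∞, where c_α = 1/(Γ(1−α)Γ(1+α)). In particular Y_{α,β}(u) < ∞ almost surely. -/

import Mathlib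

open MeasureTheory Filter Real Set intervalIntegral
open scoped ENNReal

lemma measurable_rpow_const (c : ℝ) : Measurable fun x : ℝ => x ^ c := by
  apply measurable_of_measurable_on_compl_singleton (0:ℝ)
  apply Continuous.measurable
  rw [continuous_iff_continuousAt]
  rintro ⟨x, hx⟩
  exact (Real.continuousAt_rpow_const x c (Or.inl hx)).comp_of_eq continuousAt_subtype_val rfl

lemma Measurable.rpow_const' {α : Type*} [MeasurableSpace α] {f : α → ℝ} (hf : Measurable f)
    (c : ℝ) : Measurable fun x => f x ^ c := (measurable_rpow_const c).comp hf

lemma lintegral_image_eq_lintegral_abs_deriv_mul' {s : Set ℝ} {f f' : ℝ → ℝ}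
    (hs : MeasurableSet s) (hf' : ∀ x ∈ s, HasDerivWithinAt f (f' x) s x)
    (hf : Set.InjOn f s) (g : ℝ → ℝ≥0∞) :
    ∫⁻ x in f '' s, g x = ∫⁻ x in s, ENNReal.ofReal |f' x| * g (f x) := by
  simpa only [ContinuousLinearMap.det_toSpanSingleton] using
    lintegral_image_eq_lintegral_abs_det_fderiv_mul volume hs
      (fun x hx => (hf' x hx).hasFDerivWithinAt) hf g

lemma k_integrableOn {α β : ℝ} (hα : 0 < α) (hα1 : α < 1) (hβ : 0 < β) (hβα : β ≤ α) :
    IntegrableOn (fun x : ℝ => (1 - x ^ α) * (1 - x) ^ (-β - 1)) (Set.Ioo 0 1) := by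
  have hβ1 : β < 1 := lt_of_le_of_lt hβα hα1
  have hm : IntervalIntegrable (fun x : ℝ => (1 - x) ^ (-β)) volume 0 1 := by
    have h1 : IntervalIntegrable (fun x : ℝ => x ^ (-β)) volume 0 1 :=
      intervalIntegral.intervalIntegrable_rpow' (by linarith)
    have := h1.comp_sub_left 1
    simpa using this.symm
  have hmOn : IntegrableOn (fun x : ℝ => (1 - x) ^ (-β)) (Set.Ioo 0 1) := by
    have := (intervalIntegrable_iff_integrableOn_Ioo_of_le (by norm_num : (0:ℝ) ≤ 1)).1 hm
    exact this
  have hkmeas : AEStronglyMeasurable (fun x : ℝ => (1 - x ^ α) * (1 - x) ^ (-β - 1))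
      (volume.restrict (Set.Ioo 0 1)) := by
    apply Measurable.aestronglyMeasurable
    exact ((measurable_const.sub (measurable_id.rpow_const' α)).mul
      ((measurable_const.sub measurable_id).rpow_const' (-β-1)))
  refine hmOn.mono' hkmeas ?_
  filter_upwards [ae_restrict_mem measurableSet_Ioo] with x hx
  obtain ⟨hx0, hx1⟩ := hx
  have h1x : (0:ℝ) < 1 - x := by linarith
  have hxα : x ≤ x ^ α := by
    have := Real.rpow_le_rpow_of_exponent_ge hx0 hx1.le hα1.le
    simpa using this
  have hxα1 : x ^ α ≤ 1 := Real.rpow_le_one hx0.le hx1.le hα.le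
  have hk_nn : 0 ≤ (1 - x ^ α) * (1 - x) ^ (-β - 1) :=
    mul_nonneg (by linarith) (Real.rpow_nonneg h1x.le _)
  rw [Real.norm_of_nonneg hk_nn]
  calc (1 - x ^ α) * (1 - x) ^ (-β - 1)
      ≤ (1 - x) * (1 - x) ^ (-β - 1) :=
        mul_le_mul_of_nonneg_right (by linarith) (Real.rpow_nonneg h1x.le _)
    _ = (1 - x) ^ (-β) := by
        rw [← Real.rpow_one_add' h1x.le (by intro h; rw [add_comm] at h; nlinarith : (1:ℝ) + (-β - 1) ≠ 0)]
        ring_nf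

lemma tIntegral {α β u c : ℝ} (hα : 0 < α) (hα1 : α < 1) (hβ : 0 < β) (hβα : β ≤ α)
    (hu : 0 < u) (hc : 0 < c) :
    (∫⁻ t in Set.Ioi (0:ℝ), (ENNReal.ofReal (c * u ^ α)
        - ENNReal.ofReal (c * (max (u - t ^ (-β⁻¹)) 0) ^ α)))
      = ENNReal.ofReal (c * u ^ (α - β) *
          (1 + β * ∫ x in (0:ℝ)..1, (1 - x ^ α) * (1 - x) ^ (-β - 1))) := by
  have hβinv : (-β⁻¹ : ℝ) < 0 := by simp [hβ, inv_pos]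
  have hT : (0:ℝ) < u ^ (-β) := Real.rpow_pos_of_pos hu _
  have hsplit : Set.Ioi (0:ℝ) = Set.Ioc 0 (u ^ (-β)) ∪ Set.Ioi (u ^ (-β)) :=
    (Set.Ioc_union_Ioi_eq_Ioi hT.le).symm
  rw [hsplit, lintegral_union measurableSet_Ioi Set.Ioc_disjoint_Ioi_same]
  -- Part 1
  have hpart1 : (∫⁻ t in Set.Ioc (0:ℝ) (u ^ (-β)), (ENNReal.ofReal (c * u ^ α)
        - ENNReal.ofReal (c * (max (u - t ^ (-β⁻¹)) 0) ^ α)))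
      = ENNReal.ofReal (c * u ^ (α - β)) := by
    have h1 : ∀ t ∈ Set.Ioc (0:ℝ) (u ^ (-β)),
        (ENNReal.ofReal (c * u ^ α)
          - ENNReal.ofReal (c * (max (u - t ^ (-β⁻¹)) 0) ^ α))
        = ENNReal.ofReal (c * u ^ α) := by
      rintro t ⟨ht0, htT⟩
      have h2 : u ≤ t ^ (-β⁻¹) := by
        have := Real.rpow_le_rpow_of_nonpos ht0 htT hβinv.le
        rwa [← Real.rpow_mul hu.le, neg_mul_neg, mul_inv_cancel₀ hβ.ne', Real.rpow_one] at this
      rw [max_eq_right (by linarith), Real.zero_rpow hα.ne', mul_zero, ENNReal.ofReal_zero,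
        tsub_zero]
    rw [setLIntegral_congr_fun measurableSet_Ioc h1, setLIntegral_const,
      Real.volume_Ioc, sub_zero, ← ENNReal.ofReal_mul (by positivity), mul_assoc,
      ← Real.rpow_add hu]
    ring_nf
  rw [hpart1]
  -- Part 2 : substitution
  have hphiim : (fun x : ℝ => (u * (1 - x)) ^ (-β)) '' (Set.Ioo 0 1) = Set.Ioi (u ^ (-β)) := by
    ext t
    constructor
    · rintro ⟨x, ⟨hx0, hx1⟩, rfl⟩
      have h1x : (0:ℝ) < u * (1 - x) := by nlinarith
      have h2 : u * (1 - x) < u := by nlinarith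
      exact Real.rpow_lt_rpow_of_neg h1x h2 (by linarith)
    · intro ht
      have ht' : u ^ (-β) < t := ht
      have ht0 : (0:ℝ) < t := lt_trans hT ht'
      have h1 : t ^ (-β⁻¹) < u := by
        have := Real.rpow_lt_rpow_of_neg hT ht' hβinv
        rwa [← Real.rpow_mul hu.le, neg_mul_neg, mul_inv_cancel₀ hβ.ne', Real.rpow_one] at this
      have h2 : (0:ℝ) < t ^ (-β⁻¹) := Real.rpow_pos_of_pos ht0 _
      refine ⟨1 - u⁻¹ * t ^ (-β⁻¹), ⟨?_, ?_⟩, ?_⟩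
      · have : u⁻¹ * t ^ (-β⁻¹) < 1 := by
          rw [inv_mul_lt_iff₀ hu, mul_one]; exact h1
        linarith
      · have : 0 < u⁻¹ * t ^ (-β⁻¹) := by positivity
        linarith
      · show (u * (1 - (1 - u⁻¹ * t ^ (-β⁻¹)))) ^ (-β) = t
        have h5 : u * (1 - (1 - u⁻¹ * t ^ (-β⁻¹))) = t ^ (-β⁻¹) := by
          field_simp
          ring
        rw [h5, ← Real.rpow_mul ht0.le, neg_mul_neg, inv_mul_cancel₀ hβ.ne', Real.rpow_one]
  have hphideriv : ∀ x ∈ Set.Ioo (0:ℝ) 1,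
      HasDerivWithinAt (fun x : ℝ => (u * (1 - x)) ^ (-β))
        (β * u * (u * (1 - x)) ^ (-β - 1)) (Set.Ioo 0 1) x := by
    rintro x ⟨hx0, hx1⟩
    have h1x : u * (1 - x) ≠ 0 := by nlinarith
    have hinner : HasDerivAt (fun x : ℝ => u * (1 - x)) (-u) x := by
      have := ((hasDerivAt_id x).const_sub 1).const_mul u
      simpa using this
    have houter : HasDerivAt (fun z : ℝ => z ^ (-β))
        (-β * (u * (1 - x)) ^ (-β - 1)) (u * (1 - x)) :=
      Real.hasDerivAt_rpow_const (Or.inl h1x)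
    have := HasDerivAt.comp x houter hinner
    have h2 : -β * (u * (1 - x)) ^ (-β - 1) * -u = β * u * (u * (1 - x)) ^ (-β - 1) := by ring
    rw [h2] at this
    exact this.hasDerivWithinAt
  have hphiinj : Set.InjOn (fun x : ℝ => (u * (1 - x)) ^ (-β)) (Set.Ioo 0 1) := by
    have : StrictMonoOn (fun x : ℝ => (u * (1 - x)) ^ (-β)) (Set.Ioo 0 1) := by
      rintro x ⟨hx0, hx1⟩ y ⟨hy0, hy1⟩ hxy
      have h1 : (0:ℝ) < u * (1 - y) := by nlinarith
      have h2 : u * (1 - y) < u * (1 - x) := by nlinarith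
      exact Real.rpow_lt_rpow_of_neg h1 h2 (by linarith)
    exact this.injOn
  rw [← hphiim, lintegral_image_eq_lintegral_abs_deriv_mul' measurableSet_Ioo hphideriv hphiinj]
  -- pointwise simplification
  have hpoint : ∀ x ∈ Set.Ioo (0:ℝ) 1,
      ENNReal.ofReal |β * u * (u * (1 - x)) ^ (-β - 1)| *
        (ENNReal.ofReal (c * u ^ α)
          - ENNReal.ofReal (c * (max (u - ((u * (1 - x)) ^ (-β)) ^ (-β⁻¹)) 0) ^ α))
      = ENNReal.ofReal (c * β * u ^ (α - β)) *
          ENNReal.ofReal ((1 - x ^ α) * (1 - x) ^ (-β - 1)) := by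
    rintro x ⟨hx0, hx1⟩
    have h1x : (0:ℝ) < 1 - x := by linarith
    have hux : (0:ℝ) < u * (1 - x) := by positivity
    have hx' : ((u * (1 - x)) ^ (-β:ℝ)) ^ (-β⁻¹:ℝ) = u * (1 - x) := by
      rw [← Real.rpow_mul hux.le, neg_mul_neg, mul_inv_cancel₀ hβ.ne', Real.rpow_one]
    rw [hx']
    have h3 : u - u * (1 - x) = u * x := by ring
    rw [h3, max_eq_left (by positivity), Real.mul_rpow hu.le hx0.le]
    have h4 : c * (u ^ α * x ^ α) ≤ c * u ^ α := by
      have hxα1 : x ^ α ≤ 1 := Real.rpow_le_one hx0.le hx1.le hα.le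
      have : u ^ α * x ^ α ≤ u ^ α * 1 :=
        mul_le_mul_of_nonneg_left hxα1 (Real.rpow_nonneg hu.le _)
      nlinarith [Real.rpow_pos_of_pos hu α]
    rw [← ENNReal.ofReal_sub _ (by positivity)]
    have hphi'pos : (0:ℝ) ≤ β * u * (u * (1 - x)) ^ (-β - 1) := by positivity
    rw [abs_of_nonneg hphi'pos, ← ENNReal.ofReal_mul hphi'pos, ← ENNReal.ofReal_mul (by positivity)]
    congr 1
    rw [Real.mul_rpow hu.le h1x.le]
    have h5 : u * u ^ (-β - 1 : ℝ) = u ^ (-β : ℝ) := by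
      rw [← Real.rpow_one_add' hu.le (by intro h; nlinarith : (1:ℝ) + (-β - 1) ≠ 0)]
      ring_nf
    have h6 : u ^ (-β:ℝ) * u ^ (α:ℝ) = u ^ (α - β) := by
      rw [← Real.rpow_add hu]; ring_nf
    calc β * u * (u ^ (-β - 1:ℝ) * (1 - x) ^ (-β - 1)) * (c * u ^ α - c * (u ^ α * x ^ α))
        = β * (u * u ^ (-β-1:ℝ)) * (1 - x) ^ (-β - 1) * (c * u ^ α * (1 - x ^ α)) := by ring
      _ = c * β * (u ^ (-β:ℝ) * u ^ α) * ((1 - x ^ α) * (1 - x) ^ (-β - 1)) := by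
          rw [h5]; ring
      _ = c * β * u ^ (α - β) * ((1 - x ^ α) * (1 - x) ^ (-β - 1)) := by rw [h6]
  rw [setLIntegral_congr_fun measurableSet_Ioo hpoint]
  have hkmeas : Measurable fun x : ℝ => ENNReal.ofReal ((1 - x ^ α) * (1 - x) ^ (-β - 1)) :=
    ENNReal.measurable_ofReal.comp (((measurable_const.sub (measurable_id.rpow_const' α)).mul
      ((measurable_const.sub measurable_id).rpow_const' (-β-1))))
  rw [lintegral_const_mul _ hkmeas]
  have hknn : 0 ≤ᵐ[volume.restrict (Set.Ioo (0:ℝ) 1)]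
      fun x : ℝ => (1 - x ^ α) * (1 - x) ^ (-β - 1) := by
    filter_upwards [ae_restrict_mem measurableSet_Ioo] with x hx
    obtain ⟨hx0, hx1⟩ := hx
    have hxα1 : x ^ α ≤ 1 := Real.rpow_le_one hx0.le hx1.le hα.le
    exact mul_nonneg (by linarith) (Real.rpow_nonneg (by linarith) _)
  rw [← ofReal_integral_eq_lintegral_ofReal (k_integrableOn hα hα1 hβ hβα) hknn]
  have hJeq : (∫ x in (0:ℝ)..1, (1 - x ^ α) * (1 - x) ^ (-β - 1))
      = ∫ x in Set.Ioo (0:ℝ) 1, (1 - x ^ α) * (1 - x) ^ (-β - 1) := by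
    rw [intervalIntegral.integral_of_le (by norm_num : (0:ℝ) ≤ 1),
      MeasureTheory.integral_Ioc_eq_integral_Ioo]
  have hJnn : 0 ≤ ∫ x in Set.Ioo (0:ℝ) 1, (1 - x ^ α) * (1 - x) ^ (-β - 1) :=
    integral_nonneg_of_ae hknn
  rw [hJeq, ← ENNReal.ofReal_mul (by positivity), ← ENNReal.ofReal_add (by positivity)
    (by positivity)]
  congr 1
  ring

lemma ofReal_W_eq_iInf {Ω : Type*} (W : ℝ → Ω → ℝ)
    (hmono : ∀ ω, Monotone (fun t => W t ω))
    (hrc : ∀ ω x, ContinuousWithinAt (fun t => W t ω) (Set.Ici x) x)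
    (s : ℝ) (ω : Ω) :
    ENNReal.ofReal (W s ω) = ⨅ q : ℚ, (if s < q then ENNReal.ofReal (W q ω) else ⊤) := by
  refine le_antisymm (le_iInf fun q => ?_) ?_
  · split_ifs with h
    · exact ENNReal.ofReal_le_ofReal (hmono ω h.le)
    · exact le_top
  · have hex : ∀ n : ℕ, ∃ q : ℚ, s < q ∧ (q : ℝ) < s + 1/(n+1) := by
      intro n
      have h0 : (0:ℝ) < 1/(n+1:ℝ) := by positivity
      exact exists_rat_btwn (by linarith)
    choose qs hq1 hq2 using hex
    have hts : Tendsto (fun n : ℕ => (qs n : ℝ)) atTop (nhdsWithin s (Set.Ici s)) := by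
      apply tendsto_nhdsWithin_of_tendsto_nhds_of_eventually_within
      · have h1 : Tendsto (fun n : ℕ => s + 1/(n+1:ℝ)) atTop (nhds s) := by
          have := tendsto_one_div_add_atTop_nhds_zero_nat (𝕜 := ℝ)
          have := (tendsto_const_nhds (x := s) (f := atTop (α := ℕ))).add this
          simpa using this
        exact tendsto_of_tendsto_of_tendsto_of_le_of_le tendsto_const_nhds h1
          (fun n => (hq1 n).le) (fun n => (hq2 n).le)
      · exact Eventually.of_forall fun n => (hq1 n).le
    have htd : Tendsto (fun n : ℕ => ENNReal.ofReal (W (qs n) ω)) atTop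
        (nhds (ENNReal.ofReal (W s ω))) :=
      (ENNReal.continuous_ofReal.tendsto _).comp ((hrc ω s).tendsto.comp hts)
    refine ge_of_tendsto htd (Eventually.of_forall fun n => ?_)
    calc ⨅ q : ℚ, (if s < q then ENNReal.ofReal (W q ω) else ⊤)
        ≤ if s < qs n then ENNReal.ofReal (W (qs n) ω) else ⊤ := iInf_le _ _
      _ = ENNReal.ofReal (W (qs n) ω) := by rw [if_pos (hq1 n)]

lemma joint_meas {Ω : Type*} [MeasurableSpace Ω] (W : ℝ → Ω → ℝ)
    (hmeas : ∀ t, Measurable (W t))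
    (hmono : ∀ ω, Monotone (fun t => W t ω))
    (hrc : ∀ ω x, ContinuousWithinAt (fun t => W t ω) (Set.Ici x) x)
    (g : ℝ → ℝ) (hg : Measurable g) :
    Measurable (fun p : ℝ × Ω => ENNReal.ofReal (W (g p.1) p.2)) := by
  have : (fun p : ℝ × Ω => ENNReal.ofReal (W (g p.1) p.2))
      = fun p => ⨅ q : ℚ, (if g p.1 < q then ENNReal.ofReal (W q p.2) else ⊤) := by
    funext p; exact ofReal_W_eq_iInf W hmono hrc _ _
  rw [this]
  refine Measurable.iInf fun q => Measurable.ite ?_ ?_ measurable_const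
  · exact measurableSet_lt (hg.comp measurable_fst) measurable_const
  · exact (ENNReal.measurable_ofReal.comp (hmeas q)).comp measurable_snd
lemma rpow_inv_lt {β t x : ℝ} (hβ : 0 < β) (ht : 0 < t) (hx : 0 < x) :
    t < x ^ (-β) ↔ x < t ^ (-β⁻¹) := by
  constructor
  · intro h
    have := Real.rpow_lt_rpow_of_neg ht h (by simp [hβ, inv_pos] : (-β⁻¹:ℝ) < 0)
    rwa [← Real.rpow_mul hx.le, neg_mul_neg, mul_inv_cancel₀ hβ.ne', Real.rpow_one] at this
  · intro h
    have := Real.rpow_lt_rpow_of_neg hx h (by linarith : (-β:ℝ) < 0)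
    rwa [← Real.rpow_mul ht.le, neg_mul_neg, inv_mul_cancel₀ hβ.ne', Real.rpow_one] at this

-- Step B: measure of superlevel set
lemma measB (F : StieltjesFunction ℝ) (hF0 : ∀ t ≤ (0:ℝ), F t = 0)
    {β u t : ℝ} (hβ : 0 < β) (hu : 0 < u) (ht : 0 < t) :
    (F.measure.restrict (Set.Icc 0 u)) {y | t < (u - y) ^ (-β)}
      = ENNReal.ofReal (Function.leftLim F u) - ENNReal.ofReal (F (max (u - t ^ (-β⁻¹)) 0)) := by
  have hW0 : F 0 = 0 := hF0 0 le_rfl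
  have htβ : 0 < t ^ (-β⁻¹) := Real.rpow_pos_of_pos ht _
  obtain ⟨a, ha⟩ : ∃ a:ℝ, a = u - t ^ (-β⁻¹) := ⟨_, rfl⟩
  have hmem : ∀ y, y ∈ {y | t < (u - y) ^ (-β)} ∩ Set.Icc 0 u ↔ (0 ≤ y ∧ a < y ∧ y < u) := by
    intro y
    simp only [Set.mem_inter_iff, Set.mem_setOf_eq, Set.mem_Icc]
    constructor
    · rintro ⟨h1, h2, h3⟩
      rcases eq_or_lt_of_le h3 with rfl | h3
      · rw [sub_self, Real.zero_rpow (by linarith : -β ≠ 0)] at h1; linarith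
      · have := (rpow_inv_lt hβ ht (by linarith : (0:ℝ) < u - y)).1 h1
        exact ⟨h2, by rw [ha]; linarith, h3⟩
    · rintro ⟨h1, h2, h3⟩
      refine ⟨?_, h1, h3.le⟩
      exact (rpow_inv_lt hβ ht (by linarith : (0:ℝ) < u - y)).2 (by rw [ha] at h2; linarith)
  rw [Measure.restrict_apply' measurableSet_Icc]
  rcases le_or_gt 0 a with hc | hc
  · have : {y | t < (u - y) ^ (-β)} ∩ Set.Icc 0 u = Set.Ioo a u := by
      ext y; rw [hmem y, Set.mem_Ioo]
      constructor
      · rintro ⟨_, h2, h3⟩; exact ⟨h2, h3⟩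
      · rintro ⟨h2, h3⟩; exact ⟨le_trans hc h2.le, h2, h3⟩
    rw [this, StieltjesFunction.measure_Ioo, max_eq_left (ha ▸ hc),
      ENNReal.ofReal_sub _ (by rw [← hW0]; exact F.mono hc), ha]
  · have : {y | t < (u - y) ^ (-β)} ∩ Set.Icc 0 u = Set.Ico 0 u := by
      ext y; rw [hmem y, Set.mem_Ico]
      constructor
      · rintro ⟨h1, _, h3⟩; exact ⟨h1, h3⟩
      · rintro ⟨h1, h3⟩; exact ⟨h1, lt_of_lt_of_le hc h1, h3⟩
    have hll0 : Function.leftLim F 0 = 0 := by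
      apply le_antisymm
      · have h := F.mono.leftLim_le (le_refl (0:ℝ))
        rwa [hW0] at h
      · have h := F.mono.le_leftLim (show (-1:ℝ) < 0 by norm_num)
        rwa [hF0 (-1) (by norm_num)] at h
    rw [this, StieltjesFunction.measure_Ico, hll0, max_eq_right (ha ▸ hc.le), hW0, sub_zero]
    simp

/-- For an inverse `α`-stable subordinator `W` (increasing right-continuous
paths started at `0`, with `E W(t) = t^α/(Γ(1−α)Γ(1+α))`), and `0 < β ≤ α < 1`, `u > 0`,
the fractionally integrated inverse stable subordinator
`Y(u) = ∫_{[0,u]} (u−y)^{−β} dW(y)` (pathwise Lebesgue–Stieltjes integral) satisfies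
`E Y(u) = c_α u^{α−β} (1 + β ∫₀¹ (1−x^α)(1−x)^{−β−1} dx) < ∞`,
and in particular `Y(u) < ∞` almost surely. -/
theorem fracIntegrated_inverse_stable_subordinator_mean
    {Ω : Type*} [MeasurableSpace Ω] (P : Measure Ω) [IsProbabilityMeasure P]
    (α β : ℝ) (hα : 0 < α) (hα1 : α < 1) (hβ : 0 < β) (hβα : β ≤ α)
    (W : ℝ → Ω → ℝ) (hmeas : ∀ t, Measurable (W t))
    (hmono : ∀ ω, Monotone (fun t => W t ω))
    (hrc : ∀ ω x, ContinuousWithinAt (fun t => W t ω) (Set.Ici x) x)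
    (hzero : ∀ ω, ∀ t ≤ (0:ℝ), W t ω = 0)
    (hE : ∀ t ≥ (0:ℝ),
      ∫ ω, W t ω ∂P = t ^ α / (Real.Gamma (1 - α) * Real.Gamma (1 + α)))
    (u : ℝ) (hu : 0 < u) :
    (∫⁻ ω, (∫⁻ y in Set.Icc (0:ℝ) u, ENNReal.ofReal ((u - y) ^ (-β))
        ∂((⟨fun t => W t ω, hmono ω, hrc ω⟩ : StieltjesFunction ℝ).measure)) ∂P)
      = ENNReal.ofReal ((1 / (Real.Gamma (1 - α) * Real.Gamma (1 + α))) * u ^ (α - β) *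
          (1 + β * ∫ x in (0:ℝ)..1, (1 - x ^ α) * (1 - x) ^ (-β - 1))) ∧
    ∀ᵐ ω ∂P, (∫⁻ y in Set.Icc (0:ℝ) u, ENNReal.ofReal ((u - y) ^ (-β))
        ∂((⟨fun t => W t ω, hmono ω, hrc ω⟩ : StieltjesFunction ℝ).measure)) < ⊤ := by
  set c : ℝ := 1 / (Real.Gamma (1 - α) * Real.Gamma (1 + α)) with hc
  have hΓ1 : 0 < Real.Gamma (1 - α) := Real.Gamma_pos_of_pos (by linarith)
  have hΓ2 : 0 < Real.Gamma (1 + α) := Real.Gamma_pos_of_pos (by linarith)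
  have hcpos : 0 < c := by rw [hc]; positivity
  have hW0 : ∀ ω, W 0 ω = 0 := fun ω => hzero ω 0 le_rfl
  have hWnn : ∀ s : ℝ, 0 ≤ s → ∀ ω, 0 ≤ W s ω := fun s hs ω => by
    rw [← hW0 ω]; exact hmono ω hs
  -- Step E : lintegral of W s
  have hEE : ∀ s : ℝ, 0 ≤ s →
      ∫⁻ ω, ENNReal.ofReal (W s ω) ∂P = ENNReal.ofReal (c * s ^ α) := by
    intro s hs
    rcases eq_or_lt_of_le hs with rfl | hs'
    · simp only [hW0, ENNReal.ofReal_zero, lintegral_zero, Real.zero_rpow hα.ne', mul_zero]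
    · have hval : s ^ α / (Real.Gamma (1 - α) * Real.Gamma (1 + α)) = c * s ^ α := by
        rw [hc]; ring
      by_cases hint : Integrable (W s) P
      · rw [← ofReal_integral_eq_lintegral_ofReal hint (ae_of_all _ (hWnn s hs)),
          hE s hs, hval]
      · exfalso
        have h0 : ∫ ω, W s ω ∂P = 0 := integral_undef hint
        rw [hE s hs] at h0
        have hsp : 0 < s ^ α := Real.rpow_pos_of_pos hs' _
        have : 0 < s ^ α / (Real.Gamma (1 - α) * Real.Gamma (1 + α)) := by positivity
        linarith
  -- sequence approaching u from the left
  have hsn_lt : ∀ n : ℕ, u - u / (n + 2) < u := by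
    intro n
    have : 0 < u / (n + 2 : ℝ) := by positivity
    linarith
  have hsn_nn : ∀ n : ℕ, 0 ≤ u - u / (n + 2) := by
    intro n
    have : u / (n + 2 : ℝ) ≤ u / 1 := by
      apply div_le_div_of_nonneg_left hu.le one_pos
      linarith
    rw [div_one] at this; linarith
  have hsn_mono : Monotone fun n : ℕ => u - u / (n + 2) := by
    intro n m hnm
    have : u / (m + 2 : ℝ) ≤ u / (n + 2 : ℝ) := by
      apply div_le_div_of_nonneg_left hu.le (by positivity)
      have hx : (n:ℝ) ≤ (m:ℝ) := Nat.cast_le.2 hnm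
      linarith
    simp only [ge_iff_le]; linarith
  have hsn_tendsto : Tendsto (fun n : ℕ => u - u / (n + 2)) atTop (nhdsWithin u (Set.Iio u)) := by
    apply tendsto_nhdsWithin_of_tendsto_nhds_of_eventually_within
    · have h1 : Tendsto (fun n : ℕ => u / (n + 2 : ℝ)) atTop (nhds 0) := by
        have h2 := (tendsto_const_div_atTop_nhds_zero_nat u).comp
          (tendsto_add_atTop_nat 2)
        convert h2 using 2 with n
        simp [Function.comp]
      have := (tendsto_const_nhds (x := u) (f := atTop (α := ℕ))).sub h1
      simpa using this
    · exact Eventually.of_forall fun n => hsn_lt n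
  -- Step F : leftLim representation and integral
  have hLsup : ∀ ω, ENNReal.ofReal (Function.leftLim (fun t => W t ω) u)
      = ⨆ n : ℕ, ENNReal.ofReal (W (u - u / (n + 2)) ω) := by
    intro ω
    have htd : Tendsto (fun n : ℕ => ENNReal.ofReal (W (u - u / (n + 2)) ω)) atTop
        (nhds (ENNReal.ofReal (Function.leftLim (fun t => W t ω) u))) :=
      (ENNReal.continuous_ofReal.tendsto _).comp
        (((hmono ω).tendsto_leftLim u).comp hsn_tendsto)
    have hmono' : Monotone fun n : ℕ => ENNReal.ofReal (W (u - u / (n + 2)) ω) :=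
      fun n m hnm => ENNReal.ofReal_le_ofReal (hmono ω (hsn_mono hnm))
    exact tendsto_nhds_unique htd (tendsto_atTop_iSup hmono')
  have hLmeas : Measurable fun ω => ENNReal.ofReal (Function.leftLim (fun t => W t ω) u) := by
    have : (fun ω => ENNReal.ofReal (Function.leftLim (fun t => W t ω) u))
        = fun ω => ⨆ n : ℕ, ENNReal.ofReal (W (u - u / (n + 2)) ω) := funext hLsup
    rw [this]
    exact Measurable.iSup fun n => ENNReal.measurable_ofReal.comp (hmeas _)
  have hLint : ∫⁻ ω, ENNReal.ofReal (Function.leftLim (fun t => W t ω) u) ∂P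
      = ENNReal.ofReal (c * u ^ α) := by
    have h1 : ∫⁻ ω, ENNReal.ofReal (Function.leftLim (fun t => W t ω) u) ∂P
        = ⨆ n : ℕ, ∫⁻ ω, ENNReal.ofReal (W (u - u / (n + 2)) ω) ∂P := by
      rw [show (fun ω => ENNReal.ofReal (Function.leftLim (fun t => W t ω) u))
          = fun ω => ⨆ n : ℕ, ENNReal.ofReal (W (u - u / (n + 2)) ω) from funext hLsup]
      exact lintegral_iSup (fun n => ENNReal.measurable_ofReal.comp (hmeas _))
        (fun n m hnm ω => ENNReal.ofReal_le_ofReal (hmono ω (hsn_mono hnm)))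
    rw [h1]
    have h2 : ∀ n : ℕ, ∫⁻ ω, ENNReal.ofReal (W (u - u / (n + 2)) ω) ∂P
        = ENNReal.ofReal (c * (u - u / (n + 2)) ^ α) := fun n => hEE _ (hsn_nn n)
    simp_rw [h2]
    have hmono2 : Monotone fun n : ℕ => ENNReal.ofReal (c * (u - u / (n + 2)) ^ α) := by
      intro n m hnm
      apply ENNReal.ofReal_le_ofReal
      apply mul_le_mul_of_nonneg_left _ hcpos.le
      exact Real.rpow_le_rpow (hsn_nn n) (hsn_mono hnm) hα.le
    have htd2 : Tendsto (fun n : ℕ => ENNReal.ofReal (c * (u - u / (n + 2)) ^ α)) atTop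
        (nhds (ENNReal.ofReal (c * u ^ α))) := by
      apply (ENNReal.continuous_ofReal.tendsto _).comp
      apply Tendsto.const_mul
      have hcont : ContinuousAt (fun x : ℝ => x ^ α) u :=
        Real.continuousAt_rpow_const u α (Or.inl hu.ne')
      exact hcont.tendsto.comp (hsn_tendsto.mono_right nhdsWithin_le_nhds)
    exact tendsto_nhds_unique (tendsto_atTop_iSup hmono2) htd2
  -- Step A+B : per-ω layer cake
  have hAB : ∀ ω, (∫⁻ y in Set.Icc (0:ℝ) u, ENNReal.ofReal ((u - y) ^ (-β))
        ∂((⟨fun t => W t ω, hmono ω, hrc ω⟩ : StieltjesFunction ℝ).measure))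
      = ∫⁻ t in Set.Ioi (0:ℝ),
          (ENNReal.ofReal (Function.leftLim (fun t => W t ω) u)
            - ENNReal.ofReal (W (max (u - t ^ (-β⁻¹)) 0) ω)) := by
    intro ω
    set F : StieltjesFunction ℝ := ⟨fun t => W t ω, hmono ω, hrc ω⟩ with hF
    have hnn : 0 ≤ᵐ[F.measure.restrict (Set.Icc 0 u)] fun y => (u - y) ^ (-β) := by
      filter_upwards [ae_restrict_mem measurableSet_Icc] with y hy
      exact Real.rpow_nonneg (by linarith [hy.2]) _
    have hmble : AEMeasurable (fun y : ℝ => (u - y) ^ (-β))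
        (F.measure.restrict (Set.Icc 0 u)) :=
      ((measurable_const.sub measurable_id).rpow_const' (-β)).aemeasurable
    rw [lintegral_eq_lintegral_meas_lt (F.measure.restrict (Set.Icc 0 u)) hnn hmble]
    refine setLIntegral_congr_fun measurableSet_Ioi (fun t ht => ?_)
    exact measB F (fun s hs => hzero ω s hs) hβ hu ht
  -- the two-variable kernel
  have hFmeas : Measurable fun p : Ω × ℝ =>
      (ENNReal.ofReal (Function.leftLim (fun t => W t p.1) u)
        - ENNReal.ofReal (W (max (u - p.2 ^ (-β⁻¹)) 0) p.1)) := by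
    apply Measurable.fun_sub
    · exact hLmeas.comp measurable_fst
    · have hg : Measurable fun t : ℝ => max (u - t ^ (-β⁻¹)) 0 :=
        (measurable_const.sub (measurable_id.rpow_const' (-β⁻¹))).max measurable_const
      have := joint_meas W hmeas hmono hrc _ hg
      exact this.comp measurable_swap
  -- swap
  have hswap : (∫⁻ ω, (∫⁻ y in Set.Icc (0:ℝ) u, ENNReal.ofReal ((u - y) ^ (-β))
        ∂((⟨fun t => W t ω, hmono ω, hrc ω⟩ : StieltjesFunction ℝ).measure)) ∂P)
      = ∫⁻ t in Set.Ioi (0:ℝ), ∫⁻ ω,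
          (ENNReal.ofReal (Function.leftLim (fun t => W t ω) u)
            - ENNReal.ofReal (W (max (u - t ^ (-β⁻¹)) 0) ω)) ∂P := by
    rw [lintegral_congr hAB]
    exact lintegral_lintegral_swap hFmeas.aemeasurable
  -- Step D : compute the ω-integral for fixed t
  have hD : ∀ t ∈ Set.Ioi (0:ℝ), (∫⁻ ω,
        (ENNReal.ofReal (Function.leftLim (fun t => W t ω) u)
          - ENNReal.ofReal (W (max (u - t ^ (-β⁻¹)) 0) ω)) ∂P)
      = ENNReal.ofReal (c * u ^ α)
          - ENNReal.ofReal (c * (max (u - t ^ (-β⁻¹)) 0) ^ α) := by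
    intro t ht
    have ht' : (0:ℝ) < t := ht
    have hgt : max (u - t ^ (-β⁻¹)) 0 < u := by
      have : 0 < t ^ (-β⁻¹ : ℝ) := Real.rpow_pos_of_pos ht' _
      apply max_lt (by linarith) hu
    have hgnn : 0 ≤ max (u - t ^ (-β⁻¹)) 0 := le_max_right _ _
    rw [lintegral_sub ((hmeas _).ennreal_ofReal)]
    · rw [hLint, hEE _ hgnn]
    · rw [hEE _ hgnn]; exact ENNReal.ofReal_ne_top
    · apply ae_of_all
      intro ω
      apply ENNReal.ofReal_le_ofReal
      exact (hmono ω).le_leftLim hgt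
  -- put together part 1
  constructor
  · rw [hswap, setLIntegral_congr_fun measurableSet_Ioi hD]
    exact tIntegral hα hα1 hβ hβα hu hcpos
  · -- a.s. finiteness
    have hmeas_h : Measurable fun ω => ∫⁻ t in Set.Ioi (0:ℝ),
        (ENNReal.ofReal (Function.leftLim (fun t => W t ω) u)
          - ENNReal.ofReal (W (max (u - t ^ (-β⁻¹)) 0) ω)) := by
      exact Measurable.lintegral_prod_right hFmeas
    have htot : (∫⁻ ω, (∫⁻ t in Set.Ioi (0:ℝ),
        (ENNReal.ofReal (Function.leftLim (fun t => W t ω) u)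
          - ENNReal.ofReal (W (max (u - t ^ (-β⁻¹)) 0) ω))) ∂P) ≠ ⊤ := by
      rw [← lintegral_congr hAB, hswap,
        setLIntegral_congr_fun measurableSet_Ioi hD,
        tIntegral hα hα1 hβ hβα hu hcpos]
      exact ENNReal.ofReal_ne_top
    filter_upwards [ae_lt_top hmeas_h htot] with ω hω
    rwa [hAB ω]
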